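/- Let d ≥ 2 be an integer and let ψ(x) = x + Σ_{n≥2} β_n xⁿ be a formal power series over ℝ with vanishing constant coefficient and linear coefficient 1 that satisfies, as an identity of formal power series, the invariance equation ψ(x) − 2(x + ψ(x))^d = ψ( ψ(x) − (x + ψ(x))^d ). Then β_n = 0 for every n that is not of the form d + k(d−1) with k ≥ 0 an integer; moreover β_d = −2^d and β_{2d−1} = −3d·2^{2d−1}. -/

import Mathlib

open PowerSeries

private lemma Zlem {h : PowerSeries ℝ} (h0 : coeff (R := ℝ) 0 h = 0) {k m : ℕ} (hm : m < k) :
    coeff (R := ℝ) m (h ^ k) = 0 := by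
  have hX : (X : PowerSeries ℝ) ∣ h := X_dvd_iff.mpr (by rwa [← coeff_zero_eq_constantCoeff])
  exact X_pow_dvd_iff.mp (pow_dvd_pow_of_dvd hX k) m hm

private lemma Qlem {h : PowerSeries ℝ} {s : ℕ} (h0 : coeff (R := ℝ) 0 h = 0) (hs2 : 2 ≤ s)
    (hs : ∀ a, 1 < a → a < s → coeff (R := ℝ) a h = 0) :
    ∀ k m, m < k + s - 1 →
      coeff (R := ℝ) m (h ^ k) = if m = k then (coeff (R := ℝ) 1 h) ^ k else 0 := by
  intro k
  induction k with
  | zero =>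
    intro m _
    simp [pow_zero, coeff_one]
  | succ k ih =>
    intro m hm
    rw [pow_succ, coeff_mul]
    by_cases hmk : m = k + 1
    · subst hmk
      rw [Finset.sum_eq_single_of_mem ((k, 1) : ℕ × ℕ)
        (by simp [Finset.HasAntidiagonal.mem_antidiagonal]) ?_]
      · rw [ih k (by omega), if_pos rfl, if_pos rfl, ← pow_succ]
      · rintro ⟨a, b⟩ hab hne
        simp only [Finset.HasAntidiagonal.mem_antidiagonal] at hab
        rcases lt_trichotomy a k with h1 | h1 | h1
        · rw [Zlem h0 h1, zero_mul]
        · have hb : b = 1 := by omega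
          exact absurd (by rw [h1, hb]) hne
        · have hb : b = 0 := by omega
          rw [hb, h0, mul_zero]
    · rw [if_neg hmk]
      apply Finset.sum_eq_zero
      rintro ⟨a, b⟩ hab
      simp only [Finset.HasAntidiagonal.mem_antidiagonal] at hab
      by_cases hb0 : b = 0
      · rw [hb0, h0, mul_zero]
      · rcases lt_trichotomy a k with h1 | h1 | h1
        · rw [Zlem h0 h1, zero_mul]
        · have hb : 1 < b ∧ b < s := by omega
          rw [hs b hb.1 hb.2, mul_zero]
        · rw [ih a (by omega), if_neg (by omega), zero_mul]

private lemma E3lem {h : PowerSeries ℝ} {s : ℕ} (h0 : coeff (R := ℝ) 0 h = 0) (hs2 : 2 ≤ s)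
    (hs : ∀ a, 1 < a → a < s → coeff (R := ℝ) a h = 0) :
    ∀ k, 1 ≤ k → coeff (R := ℝ) (k + s - 1) (h ^ k) =
      (k : ℝ) * coeff (R := ℝ) s h * (coeff (R := ℝ) 1 h) ^ (k - 1) := by
  intro k
  induction k with
  | zero => intro hk; omega
  | succ k ih =>
    intro _
    by_cases hk0 : k = 0
    · subst hk0
      have hidx : 0 + 1 + s - 1 = s := by omega
      rw [hidx, pow_one]
      push_cast
      ring
    · have hk1 : 1 ≤ k := by omega
      have hidx : k + 1 + s - 1 = k + s := by omega
      rw [hidx, pow_succ, coeff_mul]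
      have hsub : ({(k, s), (k + s - 1, 1)} : Finset (ℕ × ℕ)) ⊆ Finset.HasAntidiagonal.antidiagonal (k + s) := by
        intro p hp
        simp only [Finset.mem_insert, Finset.mem_singleton] at hp
        rcases hp with rfl | rfl <;> simp [Finset.HasAntidiagonal.mem_antidiagonal] <;> omega
      have hout : ∀ p ∈ Finset.HasAntidiagonal.antidiagonal (k + s),
          p ∉ ({(k, s), (k + s - 1, 1)} : Finset (ℕ × ℕ)) →
          coeff (R := ℝ) p.1 (h ^ k) * coeff (R := ℝ) p.2 h = 0 := by
        rintro ⟨a, b⟩ hab hnot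
        simp only [Finset.HasAntidiagonal.mem_antidiagonal] at hab
        simp only [Finset.mem_insert, Finset.mem_singleton, Prod.mk.injEq, not_or] at hnot
        by_cases hb0 : b = 0
        · rw [hb0, h0, mul_zero]
        · rcases lt_trichotomy a k with h1 | h1 | h1
          · rw [Zlem h0 h1, zero_mul]
          · exact absurd ⟨h1, by omega⟩ hnot.1
          · have ha2 : a ≤ k + s - 1 := by omega
            rcases eq_or_lt_of_le ha2 with he | hlt
            · exact absurd ⟨he, by omega⟩ hnot.2
            · rw [Qlem h0 hs2 hs k a (by omega), if_neg (by omega), zero_mul]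
      rw [← Finset.sum_subset hsub hout,
        Finset.sum_pair (by simp only [ne_eq, Prod.mk.injEq, not_and]; omega)]
      rw [Qlem h0 hs2 hs k k (by omega), if_pos rfl, ih hk1]
      have hc : (coeff (R := ℝ) 1 h) ^ (k - 1) * coeff (R := ℝ) 1 h = (coeff (R := ℝ) 1 h) ^ k := by
        rw [← pow_succ]; congr 1; omega
      have hk' : (k : ℕ) + 1 - 1 = k := by omega
      rw [hk']
      push_cast
      linear_combination ((k : ℝ) * coeff (R := ℝ) s h) * hc

private lemma Mlem {h : PowerSeries ℝ} {e N : ℕ} (h0 : coeff (R := ℝ) 0 h = 0)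
    (hmod : ∀ m, m < N → coeff (R := ℝ) m h ≠ 0 → m ≡ 1 [MOD e]) :
    ∀ k n, n + 1 < N + k → coeff (R := ℝ) n (h ^ k) ≠ 0 → n ≡ k [MOD e] := by
  intro k
  induction k with
  | zero =>
    intro n hn hne
    rw [pow_zero, coeff_one] at hne
    split_ifs at hne with hn0
    · subst hn0; rfl
    · exact absurd rfl hne
  | succ k ih =>
    intro n hn hne
    rw [pow_succ, coeff_mul] at hne
    obtain ⟨⟨b, a⟩, hab, hne2⟩ := Finset.exists_ne_zero_of_sum_ne_zero hne
    simp only [Finset.HasAntidiagonal.mem_antidiagonal] at hab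
    have hb : coeff (R := ℝ) b (h ^ k) ≠ 0 := fun hz => hne2 (by rw [hz, zero_mul])
    have ha : coeff (R := ℝ) a h ≠ 0 := fun hz => hne2 (by rw [hz, mul_zero])
    have hbk : k ≤ b := by
      by_contra hlt
      exact hb (Zlem h0 (by omega))
    have ha1 : a ≠ 0 := fun hz => ha (by rw [hz]; exact h0)
    have h1 := hmod a (by omega) ha
    have h2 := ih b (by omega) hb
    have h3 := h2.add h1
    rwa [hab] at h3

/-- Composition `f ∘ g` of formal power series (intended for `g` with zero
constant coefficient, in which case `coeff n (g ^ k) = 0` for `k > n` and the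
finite sum below gives the usual substitution of `g` into `f`). -/
noncomputable def psComp (f g : PowerSeries ℝ) : PowerSeries ℝ :=
  PowerSeries.mk fun n =>
    ∑ k ∈ Finset.range (n + 1), PowerSeries.coeff (R := ℝ) k f * PowerSeries.coeff (R := ℝ) n (g ^ k)

/-- structure of the Taylor coefficients of the center manifold. -/
theorem stmt4 (d : ℕ) (hd : 2 ≤ d) (ψ : PowerSeries ℝ)
    (h0 : PowerSeries.coeff (R := ℝ) 0 ψ = 0) (h1 : PowerSeries.coeff (R := ℝ) 1 ψ = 1)
    (hinv : ψ - 2 * (PowerSeries.X + ψ) ^ d =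
      psComp ψ (ψ - (PowerSeries.X + ψ) ^ d)) :
    (∀ n : ℕ, 2 ≤ n → (¬ ∃ k : ℕ, n = d + k * (d - 1)) →
      PowerSeries.coeff (R := ℝ) n ψ = 0) ∧
    PowerSeries.coeff (R := ℝ) d ψ = -(2 : ℝ) ^ d ∧
    PowerSeries.coeff (R := ℝ) (2 * d - 1) ψ = -(3 * d * 2 ^ (2 * d - 1)) := by
  classical
  -- the coefficient-wise form of the invariance equation
  have key : ∀ n : ℕ,
      coeff (R := ℝ) n ψ - (coeff (R := ℝ) n ((X + ψ) ^ d) + coeff (R := ℝ) n ((X + ψ) ^ d)) =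
      ∑ k ∈ Finset.range (n + 1),
        coeff (R := ℝ) k ψ * coeff (R := ℝ) n ((ψ - (X + ψ) ^ d) ^ k) := by
    intro n
    have h := congrArg (coeff (R := ℝ) n) hinv
    rw [two_mul, map_sub, map_add] at h
    rw [h, psComp, coeff_mk]
  have htriv : ∀ (f : PowerSeries ℝ) (a : ℕ), 1 < a → a < 2 → coeff (R := ℝ) a f = 0 :=
    fun f a ha1 ha2 => absurd ha2 (by omega)
  have hh0 : coeff (R := ℝ) 0 (X + ψ) = 0 := by
    rw [map_add, coeff_X, if_neg (by omega), zero_add, h0]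
  have hh1 : coeff (R := ℝ) 1 (X + ψ) = 2 := by
    rw [map_add, coeff_X, if_pos rfl, h1]; norm_num
  have hhm : ∀ m, m ≠ 1 → coeff (R := ℝ) m (X + ψ) = coeff (R := ℝ) m ψ := by
    intro m hm; rw [map_add, coeff_X, if_neg hm, zero_add]
  have hg : ∀ m, coeff (R := ℝ) m (ψ - (X + ψ) ^ d) = coeff (R := ℝ) m ψ - coeff (R := ℝ) m ((X + ψ) ^ d) :=
    fun m => map_sub _ _ _
  have hg0 : coeff (R := ℝ) 0 (ψ - (X + ψ) ^ d) = 0 := by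
    rw [hg, h0, Zlem hh0 (by omega : 0 < d), sub_zero]
  have hg1 : coeff (R := ℝ) 1 (ψ - (X + ψ) ^ d) = 1 := by
    rw [hg, h1, Zlem hh0 (by omega : 1 < d), sub_zero]
  have hd1 : d ≡ 1 [MOD (d - 1)] :=
    ((Nat.modEq_iff_dvd' (by omega)).mpr ⟨1, by omega⟩).symm
  -- Part A
  have hA : ∀ n, 2 ≤ n → ¬ ((d - 1) ∣ (n - 1)) → coeff (R := ℝ) n ψ = 0 := by
    by_contra hcon
    push_neg at hcon
    obtain ⟨n₀, hn₀⟩ := hcon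
    have hex : ∃ n, 2 ≤ n ∧ ¬ (d - 1) ∣ (n - 1) ∧ coeff (R := ℝ) n ψ ≠ 0 :=
      ⟨n₀, hn₀.1, hn₀.2.1, hn₀.2.2⟩
    obtain ⟨hN2, hNdvd, hNne⟩ := Nat.find_spec hex
    set N := Nat.find hex with hNdef
    have hmin : ∀ m, m < N → ¬ (2 ≤ m ∧ ¬ (d - 1) ∣ (m - 1) ∧ coeff (R := ℝ) m ψ ≠ 0) :=
      fun m hm => Nat.find_min hex hm
    have hψmod : ∀ m, m < N → coeff (R := ℝ) m ψ ≠ 0 → m ≡ 1 [MOD (d - 1)] := by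
      intro m hm hne
      rcases Nat.lt_or_ge m 2 with hm2 | hm2
      · interval_cases m
        · exact absurd h0 hne
        · rfl
      · have hdvd : (d - 1) ∣ (m - 1) := by
          by_contra hnd; exact hmin m hm ⟨hm2, hnd, hne⟩
        exact ((Nat.modEq_iff_dvd' (by omega)).mpr hdvd).symm
    have hhmod : ∀ m, m < N → coeff (R := ℝ) m (X + ψ) ≠ 0 → m ≡ 1 [MOD (d - 1)] := by
      intro m hm hne
      by_cases hm1 : m = 1
      · subst hm1; rfl
      · rw [hhm m hm1] at hne; exact hψmod m hm hne
    have hN1 : ¬ N ≡ 1 [MOD (d - 1)] := by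
      intro hmod; exact hNdvd ((Nat.modEq_iff_dvd' (by omega)).mp hmod.symm)
    have hHN : coeff (R := ℝ) N ((X + ψ) ^ d) = 0 := by
      by_contra hne
      exact hN1 ((Mlem hh0 hhmod d N (by omega) hne).trans hd1)
    have hgmod : ∀ m, m < N → coeff (R := ℝ) m (ψ - (X + ψ) ^ d) ≠ 0 → m ≡ 1 [MOD (d - 1)] := by
      intro m hm hne
      rw [hg] at hne
      by_cases hp : coeff (R := ℝ) m ψ = 0
      · have hne2 : coeff (R := ℝ) m ((X + ψ) ^ d) ≠ 0 := by
          intro hz; exact hne (by rw [hp, hz, sub_zero])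
        exact (Mlem hh0 hhmod d m (by omega) hne2).trans hd1
      · exact hψmod m hm hp
    have hsum : ∑ k ∈ Finset.range (N + 1),
        coeff (R := ℝ) k ψ * coeff (R := ℝ) N ((ψ - (X + ψ) ^ d) ^ k)
        = coeff (R := ℝ) N ψ + coeff (R := ℝ) N ψ := by
      have hsub : ({1, N} : Finset ℕ) ⊆ Finset.range (N + 1) := by
        intro x hx
        simp only [Finset.mem_insert, Finset.mem_singleton] at hx
        rcases hx with rfl | rfl <;> simp only [Finset.mem_range] <;> omega
      have hout : ∀ x ∈ Finset.range (N + 1), x ∉ ({1, N} : Finset ℕ) →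
          coeff (R := ℝ) x ψ * coeff (R := ℝ) N ((ψ - (X + ψ) ^ d) ^ x) = 0 := by
        intro x hx hnx
        simp only [Finset.mem_insert, Finset.mem_singleton, not_or] at hnx
        simp only [Finset.mem_range] at hx
        rcases Nat.lt_or_ge x 2 with hx2 | hx2
        · have hx0 : x = 0 := by omega
          rw [hx0, h0, zero_mul]
        · by_cases hψx : coeff (R := ℝ) x ψ = 0
          · rw [hψx, zero_mul]
          · have hx1 : x ≡ 1 [MOD (d - 1)] := hψmod x (by omega) hψx
            have hz : coeff (R := ℝ) N ((ψ - (X + ψ) ^ d) ^ x) = 0 := by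
              by_contra hne
              exact hN1 ((Mlem hg0 hgmod x N (by omega) hne).trans hx1)
            rw [hz, mul_zero]
      rw [← Finset.sum_subset hsub hout, Finset.sum_pair (by omega : (1 : ℕ) ≠ N)]
      rw [h1, one_mul, pow_one, hg, hHN, sub_zero,
        Qlem hg0 le_rfl (htriv _) N N (by omega), if_pos rfl, hg1, one_pow, mul_one]
    have hk := key N
    rw [hHN, hsum] at hk
    apply hNne
    linarith
  -- small-index vanishing
  have hβlow : ∀ m, 2 ≤ m → m < d → coeff (R := ℝ) m ψ = 0 := by
    intro m hm2 hmd
    apply hA m hm2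
    intro hdvd
    have := Nat.le_of_dvd (by omega) hdvd
    omega
  have hβmid : ∀ m, d < m → m < 2 * d - 1 → coeff (R := ℝ) m ψ = 0 := by
    intro m hm1 hm2
    apply hA m (by omega)
    rintro ⟨c, hc⟩
    rcases c with _ | _ | c
    · simp at hc; omega
    · simp at hc; omega
    · have h5 : (d - 1) * 2 ≤ (d - 1) * (c + 1 + 1) :=
        Nat.mul_le_mul (Nat.le_refl _) (by omega)
      rw [← hc] at h5
      omega
  have hhgap : ∀ a, 1 < a → a < d → coeff (R := ℝ) a (X + ψ) = 0 := by
    intro a ha1 ha2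
    rw [hhm a (by omega), hβlow a (by omega) ha2]
  have hHd : coeff (R := ℝ) d ((X + ψ) ^ d) = 2 ^ d := by
    rw [Qlem hh0 le_rfl (htriv _) d d (by omega), if_pos rfl, hh1]
  -- Part B
  have hBd : coeff (R := ℝ) d ψ = -(2 : ℝ) ^ d := by
    have hsum : ∑ k ∈ Finset.range (d + 1),
        coeff (R := ℝ) k ψ * coeff (R := ℝ) d ((ψ - (X + ψ) ^ d) ^ k)
        = (coeff (R := ℝ) d ψ - 2 ^ d) + coeff (R := ℝ) d ψ := by
      have hsub : ({1, d} : Finset ℕ) ⊆ Finset.range (d + 1) := by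
        intro x hx
        simp only [Finset.mem_insert, Finset.mem_singleton] at hx
        rcases hx with rfl | rfl <;> simp only [Finset.mem_range] <;> omega
      have hout : ∀ x ∈ Finset.range (d + 1), x ∉ ({1, d} : Finset ℕ) →
          coeff (R := ℝ) x ψ * coeff (R := ℝ) d ((ψ - (X + ψ) ^ d) ^ x) = 0 := by
        intro x hx hnx
        simp only [Finset.mem_insert, Finset.mem_singleton, not_or] at hnx
        simp only [Finset.mem_range] at hx
        rcases Nat.lt_or_ge x 2 with hx2 | hx2
        · have hx0 : x = 0 := by omega
          rw [hx0, h0, zero_mul]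
        · rw [hβlow x hx2 (by omega), zero_mul]
      rw [← Finset.sum_subset hsub hout, Finset.sum_pair (by omega : (1 : ℕ) ≠ d)]
      rw [h1, one_mul, pow_one, hg, hHd,
        Qlem hg0 le_rfl (htriv _) d d (by omega), if_pos rfl, hg1, one_pow, mul_one]
    have hk := key d
    rw [hHd, hsum] at hk
    linarith
  -- Part C
  have hhd : coeff (R := ℝ) d (X + ψ) = -(2 : ℝ) ^ d := by
    rw [hhm d (by omega), hBd]
  have hidx : d + d - 1 = 2 * d - 1 := by omega
  have hp : (2 : ℝ) ^ d * 2 ^ (d - 1) = 2 ^ (2 * d - 1) := by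
    rw [← pow_add]; congr 1; omega
  have hq : (2 : ℝ) ^ d * 2 ^ d = 2 ^ (2 * d - 1) * 2 := by
    rw [← pow_add, ← pow_succ]; congr 1; omega
  have hHc : coeff (R := ℝ) (2 * d - 1) ((X + ψ) ^ d) = -(↑d * 2 ^ (2 * d - 1)) := by
    have h5 := E3lem hh0 hd hhgap d (by omega)
    rw [hidx] at h5
    rw [h5, hhd, hh1]
    have hc : (2 : ℝ) ^ (d - 1) * 2 = 2 ^ d := by
      rw [← pow_succ]; congr 1; omega
    linear_combination (-(d : ℝ) * 2 ^ (d - 1)) * hc + (-(d : ℝ)) * hp +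
      ((d : ℝ) * 2 ^ (d - 1)) * hc
  have hHmid : ∀ m, d < m → m < 2 * d - 1 → coeff (R := ℝ) m ((X + ψ) ^ d) = 0 := by
    intro m hm1 hm2
    rw [Qlem hh0 hd hhgap d m (by omega), if_neg (by omega)]
  have hgd : coeff (R := ℝ) d (ψ - (X + ψ) ^ d) = -(2 : ℝ) ^ d - 2 ^ d := by
    rw [hg, hBd, hHd]
  have hggap : ∀ a, 1 < a → a < d → coeff (R := ℝ) a (ψ - (X + ψ) ^ d) = 0 := by
    intro a ha1 ha2
    rw [hg, hβlow a (by omega) ha2, Zlem hh0 ha2, sub_zero]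
  have hgmid : ∀ m, d < m → m < 2 * d - 1 → coeff (R := ℝ) m (ψ - (X + ψ) ^ d) = 0 := by
    intro m hm1 hm2
    rw [hg, hβmid m hm1 hm2, hHmid m hm1 hm2, sub_zero]
  have hgdc : coeff (R := ℝ) (2 * d - 1) ((ψ - (X + ψ) ^ d) ^ d)
      = ↑d * (-(2 : ℝ) ^ d - 2 ^ d) := by
    have h5 := E3lem hg0 hd hggap d (by omega)
    rw [hidx] at h5
    rw [h5, hgd, hg1, one_pow, mul_one]
  have hgcc : coeff (R := ℝ) (2 * d - 1) ((ψ - (X + ψ) ^ d) ^ (2 * d - 1)) = 1 := by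
    rw [Qlem hg0 le_rfl (htriv _) (2 * d - 1) (2 * d - 1) (by omega), if_pos rfl,
      hg1, one_pow]
  have hCc : coeff (R := ℝ) (2 * d - 1) ψ = -(3 * d * 2 ^ (2 * d - 1)) := by
    have hsum : ∑ k ∈ Finset.range (2 * d - 1 + 1),
        coeff (R := ℝ) k ψ * coeff (R := ℝ) (2 * d - 1) ((ψ - (X + ψ) ^ d) ^ k)
        = coeff (R := ℝ) (2 * d - 1) (ψ - (X + ψ) ^ d)
          + coeff (R := ℝ) d ψ * coeff (R := ℝ) (2 * d - 1) ((ψ - (X + ψ) ^ d) ^ d)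
          + coeff (R := ℝ) (2 * d - 1) ψ := by
      have hsub : ({1, d, 2 * d - 1} : Finset ℕ) ⊆ Finset.range (2 * d - 1 + 1) := by
        intro x hx
        simp only [Finset.mem_insert, Finset.mem_singleton] at hx
        rcases hx with rfl | rfl | rfl <;> simp only [Finset.mem_range] <;> omega
      have hout : ∀ x ∈ Finset.range (2 * d - 1 + 1),
          x ∉ ({1, d, 2 * d - 1} : Finset ℕ) →
          coeff (R := ℝ) x ψ * coeff (R := ℝ) (2 * d - 1) ((ψ - (X + ψ) ^ d) ^ x) = 0 := by
        intro x hx hnx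
        simp only [Finset.mem_insert, Finset.mem_singleton, not_or] at hnx
        simp only [Finset.mem_range] at hx
        rcases Nat.lt_or_ge x 2 with hx2 | hx2
        · have hx0 : x = 0 := by omega
          rw [hx0, h0, zero_mul]
        · rcases Nat.lt_or_ge x d with hxd | hxd
          · rw [hβlow x hx2 hxd, zero_mul]
          · rw [hβmid x (by omega) (by omega), zero_mul]
      rw [← Finset.sum_subset hsub hout]
      rw [Finset.sum_insert (by
        simp only [Finset.mem_insert, Finset.mem_singleton, not_or]; omega),
        Finset.sum_pair (by omega : d ≠ 2 * d - 1)]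
      rw [h1, one_mul, pow_one, hgcc, mul_one]
      ring
    have hk := key (2 * d - 1)
    rw [hsum, hHc, hgdc, hBd, hg, hHc] at hk
    push_cast at hk ⊢
    linear_combination (-1 : ℝ) * hk + (-(2 * (d : ℝ))) * hq
  exact ⟨fun n hn hnex => by
    apply hA n hn
    rintro ⟨c, hc⟩
    rcases c with _ | c
    · simp at hc; omega
    · apply hnex
      refine ⟨c, ?_⟩
      rw [Nat.mul_succ] at hc
      rw [mul_comm]
      omega, hBd, hCc⟩
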